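/- Let ⟨Z_n,{a,b}⟩ be a standardized DFA with the subgroup sequence H₀ = {0}, H_k = ⟨D_k⟩ where D_k = {p ∈ dupl(w) | 0 ∈ excl(w) ⊆ H_{k−1}, |excl(w)| ≤ k}. If H_ℓ = H_{ℓ+1} for some ℓ, then the subgroup H_ℓ is a-invariant (H_ℓ·a ⊆ H_ℓ). -/

import Mathlib

/-- Action of a letter: `true` is `b : q ↦ q+1`, `false` is `a`. -/
def act {n : ℕ} (a : ZMod n → ZMod n) (q : ZMod n) (c : Bool) : ZMod n :=
  if c then q + 1 else a q

/-- Action of a word on a state. -/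
def wact {n : ℕ} (a : ZMod n → ZMod n) (w : List Bool) (q : ZMod n) : ZMod n :=
  w.foldl (act a) q

/-- Excluded set of a word. -/
def excl {n : ℕ} (a : ZMod n → ZMod n) (w : List Bool) : Set (ZMod n) :=
  {q | ∀ p, wact a w p ≠ q}

/-- Duplicate set of a word. -/
def dupl {n : ℕ} (a : ZMod n → ZMod n) (w : List Bool) : Set (ZMod n) :=
  {p | ∃ q₁ q₂, q₁ ≠ q₂ ∧ wact a w q₁ = p ∧ wact a w q₂ = p}

/-- Complete reachability for a standardized binary DFA on `ZMod n`. -/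
def CompletelyReachable {n : ℕ} (a : ZMod n → ZMod n) : Prop :=
  ∀ S : Set (ZMod n), S.Nonempty → ∃ w : List Bool, Set.range (wact a w) = S

/-- Standardized DFA: `a` has defect 1 with excluded state `0`, and `0·a = dupl(a)`,
i.e. `a 0` has a second preimage `r ≠ 0`. -/
def Standardized {n : ℕ} (a : ZMod n → ZMod n) : Prop :=
  Set.range a = {(0 : ZMod n)}ᶜ ∧ ∃ r : ZMod n, r ≠ 0 ∧ a r = a 0

/-- Edge of the Rystsov graph: for some word of defect 1, `q` is the excluded state
and `p` the duplicate state. -/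
def RysEdge {n : ℕ} (a : ZMod n → ZMod n) (q p : ZMod n) : Prop :=
  ∃ w : List Bool, excl a w = {q} ∧ dupl a w = {p}

/-- The difference set `D₁`. -/
def D1 {n : ℕ} (a : ZMod n → ZMod n) : Set (ZMod n) :=
  {p | RysEdge a 0 p}

/-- The set `D_k` built from a subgroup `H = H_{k-1}`. -/
def Dnext {n : ℕ} (a : ZMod n → ZMod n) (H : AddSubgroup (ZMod n)) (k : ℕ) : Set (ZMod n) :=
  {p | ∃ w : List Bool, p ∈ dupl a w ∧ (0 : ZMod n) ∈ excl a w ∧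
    excl a w ⊆ (H : Set (ZMod n)) ∧ (excl a w).ncard ≤ k}

/-- The subgroup sequence `H_k`. -/
def Hk {n : ℕ} (a : ZMod n → ZMod n) : ℕ → AddSubgroup (ZMod n)
  | 0 => ⊥
  | k + 1 => AddSubgroup.closure (Dnext a (Hk a k) (k + 1))

theorem Hk_invariant_of_stable {n : ℕ} (hn : 2 ≤ n) (a : ZMod n → ZMod n)
    (hstd : Standardized a) (ℓ : ℕ) (hℓ : Hk a ℓ = Hk a (ℓ + 1)) :
    ∀ h ∈ Hk a ℓ, a h ∈ Hk a ℓ := by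
  haveI : NeZero n := ⟨by omega⟩
  obtain ⟨hrange, r, hr0, hra⟩ := hstd
  have ha_ne : ∀ z, a z ≠ 0 := by
    intro z hz
    have hz' : a z ∈ Set.range a := ⟨z, rfl⟩
    rw [hrange] at hz'
    exact hz' hz
  have ha_surj : ∀ q : ZMod n, q ≠ 0 → ∃ p, a p = q := by
    intro q hq
    have : q ∈ Set.range a := by rw [hrange]; exact hq
    exact this
  have hDsub : Dnext a (Hk a ℓ) (ℓ + 1) ⊆ ((Hk a ℓ : AddSubgroup (ZMod n)) : Set (ZMod n)) := by
    intro p hp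
    have h1 : p ∈ AddSubgroup.closure (Dnext a (Hk a ℓ) (ℓ + 1)) :=
      AddSubgroup.subset_closure hp
    have h2 : AddSubgroup.closure (Dnext a (Hk a ℓ) (ℓ + 1)) = Hk a (ℓ + 1) := rfl
    rw [h2, ← hℓ] at h1
    exact h1
  -- foldl over replicate of `true`
  have hrep : ∀ (m : ℕ) (q : ZMod n), List.foldl (act a) q (List.replicate m true) = q + m := by
    intro m
    induction m with
    | zero => intro q; simp
    | succ m ih =>
      intro q
      rw [List.replicate_succ, List.foldl_cons]
      have : act a q true = q + 1 := by simp [act]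
      rw [this, ih]
      push_cast
      ring
  -- the extension lemma
  have EXT : ∀ (w : List Bool) (x d : ZMod n), d ∈ dupl a w →
      (∀ e ∈ excl a w, e + x ≠ 0 → a (e + x) ∈ Hk a ℓ) →
      (excl a w).ncard ≤ ℓ → a (d + x) ∈ Hk a ℓ := by
    intro w x d hd hcond hcard
    set u := w ++ List.replicate x.val true ++ [false] with hu
    have hwu : ∀ q, wact a u q = a (wact a w q + x) := by
      intro q
      rw [hu]
      show List.foldl (act a) q (w ++ List.replicate x.val true ++ [false]) = _
      rw [List.foldl_append, List.foldl_append, hrep]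
      have hxv : ((x.val : ℕ) : ZMod n) = x := ZMod.natCast_rightInverse x
      rw [hxv]
      simp [act, wact]
    have himg : ∀ y : ZMod n, y ∉ excl a w → ∃ z, wact a u z = a (y + x) := by
      intro y hy
      have : ¬ (∀ p, wact a w p ≠ y) := hy
      push_neg at this
      obtain ⟨z, hz⟩ := this
      exact ⟨z, by rw [hwu, hz]⟩
    have hexcl_sub : excl a u ⊆
        insert (0 : ZMod n) ((fun e => a (e + x)) '' {e | e ∈ excl a w ∧ e + x ≠ 0}) := by
      intro q hq
      by_cases hq0 : q = 0
      · exact hq0 ▸ Set.mem_insert _ _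
      · obtain ⟨p, hp⟩ := ha_surj q hq0
        by_cases hpE : p - x ∈ excl a w
        · by_cases hp0 : p = 0
          · -- use r instead
            by_cases hrE : r - x ∈ excl a w
            · refine Set.mem_insert_iff.mpr (Or.inr ⟨r - x, ⟨hrE, ?_⟩, ?_⟩)
              · rw [sub_add_cancel]; exact hr0
              · show a (r - x + x) = q
                rw [sub_add_cancel, hra]
                rw [hp0] at hp
                exact hp
            · obtain ⟨z, hz⟩ := himg _ hrE
              exfalso
              apply hq z
              rw [hz, sub_add_cancel, hra]
              rw [hp0] at hp
              exact hp
          · refine Set.mem_insert_iff.mpr (Or.inr ⟨p - x, ⟨hpE, ?_⟩, ?_⟩)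
            · rw [sub_add_cancel]; exact hp0
            · show a (p - x + x) = q
              rw [sub_add_cancel, hp]
        · obtain ⟨z, hz⟩ := himg _ hpE
          exfalso
          apply hq z
          rw [hz, sub_add_cancel, hp]
    apply hDsub
    refine ⟨u, ?_, ?_, ?_, ?_⟩
    · obtain ⟨q₁, q₂, hne, h1, h2⟩ := hd
      exact ⟨q₁, q₂, hne, by rw [hwu, h1], by rw [hwu, h2]⟩
    · intro p
      rw [hwu]
      exact ha_ne _
    · intro q hq
      rcases hexcl_sub hq with h0 | ⟨e, ⟨heE, hex⟩, heq⟩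
      · rw [h0]; exact (Hk a ℓ).zero_mem
      · rw [← heq]; exact hcond e heE hex
    · calc (excl a u).ncard
          ≤ (insert (0 : ZMod n)
              ((fun e => a (e + x)) '' {e | e ∈ excl a w ∧ e + x ≠ 0})).ncard :=
            Set.ncard_le_ncard hexcl_sub (Set.toFinite _)
        _ ≤ ((fun e => a (e + x)) '' {e | e ∈ excl a w ∧ e + x ≠ 0}).ncard + 1 :=
            Set.ncard_insert_le _ _
        _ ≤ ({e | e ∈ excl a w ∧ e + x ≠ 0} : Set (ZMod n)).ncard + 1 := by
            have := Set.ncard_image_le (s := {e | e ∈ excl a w ∧ e + x ≠ 0})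
              (f := fun e => a (e + x)) (Set.toFinite _)
            omega
        _ ≤ (excl a w).ncard + 1 := by
            have : ({e | e ∈ excl a w ∧ e + x ≠ 0} : Set (ZMod n)).ncard ≤ (excl a w).ncard :=
              Set.ncard_le_ncard (fun e he => he.1) (Set.toFinite _)
            omega
        _ ≤ ℓ + 1 := by omega
  -- a 0 ∈ H
  have ha0 : a 0 ∈ Hk a ℓ := by
    apply hDsub
    have hexcl1 : excl a [false] ⊆ {(0 : ZMod n)} := by
      intro q hq
      by_contra hq0
      have : q ∈ Set.range a := by rw [hrange]; simpa using hq0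
      obtain ⟨p, hp⟩ := this
      exact hq p (by simpa [wact, act] using hp)
    refine ⟨[false], ⟨r, 0, hr0, ?_, ?_⟩, ?_, ?_, ?_⟩
    · simpa [wact, act] using hra
    · simp [wact, act]
    · intro p
      simpa [wact, act] using ha_ne p
    · intro q hq
      have : q = 0 := hexcl1 hq
      rw [this]; exact (Hk a ℓ).zero_mem
    · have h1 : (excl a [false]).ncard ≤ ({(0 : ZMod n)} : Set (ZMod n)).ncard :=
        Set.ncard_le_ncard hexcl1 (Set.toFinite _)
      rw [Set.ncard_singleton] at h1
      omega
  -- main induction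
  have MAIN : ∀ k, k ≤ ℓ → ∀ x, a x ∈ Hk a ℓ → ∀ h ∈ Hk a k, a (x + h) ∈ Hk a ℓ := by
    intro k
    induction k with
    | zero =>
      intro _ x hx h hh
      have hh0 : h = 0 := by simpa [Hk, AddSubgroup.mem_bot] using hh
      rw [hh0, add_zero]
      exact hx
    | succ k ih =>
      intro hk1 x hx h hh
      have ihk := ih (by omega)
      -- property p
      have key : ∀ h', h' ∈ AddSubgroup.closure (Dnext a (Hk a k) (k + 1)) →
          ∀ y, a y ∈ Hk a ℓ → a (y + h') ∈ Hk a ℓ := by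
        intro h' hh'
        induction hh' using AddSubgroup.closure_induction with
        | mem d hdmem =>
          intro y hy
          obtain ⟨w, hd, h0, hsubk, hcard⟩ := hdmem
          have hcond : ∀ e ∈ excl a w, e + y ≠ 0 → a (e + y) ∈ Hk a ℓ := by
            intro e he _
            have heH : e ∈ Hk a k := hsubk he
            have := ihk y hy e heH
            rwa [add_comm] at this
          have hcard' : (excl a w).ncard ≤ ℓ := by omega
          have := EXT w y d hd hcond hcard'
          rwa [add_comm] at this
        | zero => intro y hy; simpa using hy
        | add g h' hg hh' ihg ihh' =>
          intro y hy
          have h1 := ihg y hy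
          have h2 := ihh' (y + g) h1
          rwa [add_assoc] at h2
        | neg g hg ihg =>
          have hsmul : ∀ (j : ℕ) (z : ZMod n), a z ∈ Hk a ℓ → a (z + j • g) ∈ Hk a ℓ := by
            intro j
            induction j with
            | zero => intro z hz; simpa using hz
            | succ j ihj =>
              intro z hz
              have h1 := ihg z hz
              have h2 := ihj (z + g) h1
              have heq : z + g + j • g = z + (j + 1) • g := by
                rw [succ_nsmul]
                ring
              rwa [heq] at h2
          have hneg : (n - 1) • g = -g := by
            have hsum : (n - 1) • g + g = 0 := by
              rw [← succ_nsmul]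
              have hnn : n - 1 + 1 = n := by omega
              rw [hnn]
              have : (n : ZMod n) = 0 := ZMod.natCast_self n
              rw [nsmul_eq_mul, this, zero_mul]
            exact eq_neg_of_add_eq_zero_left hsum
          intro y hy
          rw [← hneg]
          exact hsmul (n - 1) y hy
      exact key h hh x hx
  intro h hh
  have := MAIN ℓ le_rfl 0 ha0 h hh
  rwa [zero_add] at this
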